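/- Under the discount-update hypotheses (γ ∈ (0,1), K ∈ S_γ with J_γ(K) > ℓ₀, Ĵ ∈ ℝ with |J_γ(K) − Ĵ| ≤ J_γ(K)/2, ζ ∈ (0,1), α = ℓ₀/(2Ĵ − ℓ₀), γ' = (1 + ζα)γ), the Gramian at the enlarged discount factor satisfies ‖Σ_K(γ')‖ ≤ 4Ĵ²/((1 − ζ)ℓ₀²). -/

import Mathlib

open Matrix

noncomputable section

/-- Spectral radius of a real square matrix: the largest modulus of a complex eigenvalue. -/
def specRad {n : ℕ} (M : Matrix (Fin n) (Fin n) ℝ) : ℝ :=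
  sSup {r : ℝ | ∃ μ ∈ spectrum ℂ (M.map (algebraMap ℝ ℂ)), r = ‖μ‖}

/-- Spectral (ℓ²→ℓ² operator) norm of a real matrix. -/
def spNorm {a b : ℕ} (M : Matrix (Fin a) (Fin b) ℝ) : ℝ :=
  ‖LinearMap.toContinuousLinearMap (Matrix.toEuclideanLin M)‖

/-- Frobenius norm of a real matrix. -/
def frobNorm {a b : ℕ} (M : Matrix (Fin a) (Fin b) ℝ) : ℝ :=
  Real.sqrt (∑ i, ∑ j, (M i j) ^ 2)

/-- Euclidean norm of a vector. -/
def vecNorm {a : ℕ} (x : Fin a → ℝ) : ℝ :=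
  Real.sqrt (∑ i, (x i) ^ 2)

variable {n m p : ℕ}

/-- Closed-loop matrix `A - BKC`. -/
def Acl (A : Matrix (Fin n) (Fin n) ℝ) (B : Matrix (Fin n) (Fin m) ℝ)
    (C : Matrix (Fin p) (Fin n) ℝ) (K : Matrix (Fin m) (Fin p) ℝ) : Matrix (Fin n) (Fin n) ℝ :=
  A - B * K * C

/-- Membership in the stabilizing set `S_γ`: `√γ · ρ(A − BKC) < 1`. -/
def inS (A : Matrix (Fin n) (Fin n) ℝ) (B : Matrix (Fin n) (Fin m) ℝ)
    (C : Matrix (Fin p) (Fin n) ℝ) (γ : ℝ) (K : Matrix (Fin m) (Fin p) ℝ) : Prop :=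
  Real.sqrt γ * specRad (Acl A B C K) < 1

/-- The solution `P_K(γ) = Σ_{t} γ^t ((A−BKC)ᵀ)^t (Q + CᵀKᵀRKC) (A−BKC)^t` of the
discounted Lyapunov equation. -/
def Pmat (A : Matrix (Fin n) (Fin n) ℝ) (B : Matrix (Fin n) (Fin m) ℝ)
    (C : Matrix (Fin p) (Fin n) ℝ) (Q : Matrix (Fin n) (Fin n) ℝ) (R : Matrix (Fin m) (Fin m) ℝ)
    (γ : ℝ) (K : Matrix (Fin m) (Fin p) ℝ) : Matrix (Fin n) (Fin n) ℝ :=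
  ∑' t : ℕ, γ ^ t • ((Acl A B C K)ᵀ ^ t * (Q + Cᵀ * Kᵀ * R * K * C) * (Acl A B C K) ^ t)

/-- The Gramian `Σ_K(γ) = Σ_{t} γ^t (A−BKC)^t ((A−BKC)ᵀ)^t`. -/
def Smat (A : Matrix (Fin n) (Fin n) ℝ) (B : Matrix (Fin n) (Fin m) ℝ)
    (C : Matrix (Fin p) (Fin n) ℝ) (γ : ℝ) (K : Matrix (Fin m) (Fin p) ℝ) :
    Matrix (Fin n) (Fin n) ℝ :=
  ∑' t : ℕ, γ ^ t • ((Acl A B C K) ^ t * ((Acl A B C K)ᵀ) ^ t)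

/-- The discounted cost `J_γ(K) = Tr(P_K(γ))`. -/
def Jcost (A : Matrix (Fin n) (Fin n) ℝ) (B : Matrix (Fin n) (Fin m) ℝ)
    (C : Matrix (Fin p) (Fin n) ℝ) (Q : Matrix (Fin n) (Fin n) ℝ) (R : Matrix (Fin m) (Fin m) ℝ)
    (γ : ℝ) (K : Matrix (Fin m) (Fin p) ℝ) : ℝ :=
  (Pmat A B C Q R γ K).trace

/-- `E_K = (R + γBᵀP_K(γ)B)KC − γBᵀP_K(γ)A`. -/
def Egrad (A : Matrix (Fin n) (Fin n) ℝ) (B : Matrix (Fin n) (Fin m) ℝ)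
    (C : Matrix (Fin p) (Fin n) ℝ) (Q : Matrix (Fin n) (Fin n) ℝ) (R : Matrix (Fin m) (Fin m) ℝ)
    (γ : ℝ) (K : Matrix (Fin m) (Fin p) ℝ) : Matrix (Fin m) (Fin n) ℝ :=
  (R + γ • (Bᵀ * Pmat A B C Q R γ K * B)) * K * C - γ • (Bᵀ * Pmat A B C Q R γ K * A)

/-- The closed-form gradient `∇J_γ(K) = 2 E_K Σ_K(γ) Cᵀ`. -/
def gradJ (A : Matrix (Fin n) (Fin n) ℝ) (B : Matrix (Fin n) (Fin m) ℝ)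
    (C : Matrix (Fin p) (Fin n) ℝ) (Q : Matrix (Fin n) (Fin n) ℝ) (R : Matrix (Fin m) (Fin m) ℝ)
    (γ : ℝ) (K : Matrix (Fin m) (Fin p) ℝ) : Matrix (Fin m) (Fin p) ℝ :=
  (2 : ℝ) • (Egrad A B C Q R γ K * Smat A B C γ K * Cᵀ)

end

noncomputable section StmtAux
open Filter
variable {n : ℕ}

section Gelfand
attribute [local instance] Matrix.linftyOpNormedRing Matrix.linftyOpNormedAlgebra

lemma aux_entry_abs_le (A : Matrix (Fin n) (Fin n) ℂ) (i j : Fin n) : ‖A i j‖ ≤ ‖A‖ := by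
  rw [Matrix.linfty_opNorm_def]
  have h1 : ‖A i j‖ ≤ ∑ k, ‖A i k‖ := Finset.single_le_sum (f := fun k => ‖A i k‖)
        (fun k _ => norm_nonneg _) (Finset.mem_univ j)
  have h2 : ((∑ k, ‖A i k‖₊ : NNReal) : ℝ) ≤
      ((Finset.univ.sup fun i : Fin n => ∑ j, ‖A i j‖₊ : NNReal) : ℝ) :=
    NNReal.coe_le_coe.2 (Finset.le_sup (f := fun i : Fin n => ∑ j, ‖A i j‖₊) (Finset.mem_univ i))
  rw [NNReal.coe_sum] at h2
  simpa using h1.trans h2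

set_option maxHeartbeats 1000000 in
lemma aux_exists_entry_bound (hn : 0 < n) {γ : ℝ} (hγ : 0 < γ) (M : Matrix (Fin n) (Fin n) ℝ)
    (h : Real.sqrt γ * specRad M < 1) :
    ∃ c u : ℝ, 0 < c ∧ 0 ≤ u ∧ γ * u ^ 2 < 1 ∧
      ∀ (t : ℕ) (i j : Fin n), |(M ^ t) i j| ≤ c * u ^ t := by
  haveI : Nonempty (Fin n) := ⟨⟨0, hn⟩⟩
  haveI : CompleteSpace (Matrix (Fin n) (Fin n) ℂ) := FiniteDimensional.complete ℂ _
  set Mc : Matrix (Fin n) (Fin n) ℂ := M.map (algebraMap ℝ ℂ) with hMc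
  have hsq : 0 < Real.sqrt γ := Real.sqrt_pos.2 hγ
  have hbdd : BddAbove {r : ℝ | ∃ μ ∈ spectrum ℂ Mc, r = ‖μ‖} := by
    refine ⟨‖Mc‖, ?_⟩
    rintro r ⟨μ, hμ, rfl⟩
    exact spectrum.norm_le_norm_of_mem hμ
  have hlt : ∀ z ∈ spectrum ℂ Mc, ‖z‖₊ < (⟨1 / Real.sqrt γ, by positivity⟩ : NNReal) := by
    intro z hz
    have h1 : ‖z‖ ≤ specRad M := le_csSup hbdd ⟨z, hz, rfl⟩
    have h2 : specRad M < 1 / Real.sqrt γ := by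
      rw [lt_div_iff₀ hsq]; linarith [mul_comm (Real.sqrt γ) (specRad M)]
    exact_mod_cast lt_of_le_of_lt h1 h2
  have hρ := spectrum.spectralRadius_lt_of_forall_lt Mc hlt
  have hfin : spectralRadius ℂ Mc ≠ ⊤ := hρ.trans_le le_top |>.ne
  have hρR : (spectralRadius ℂ Mc).toReal < 1 / Real.sqrt γ := by
    have := ENNReal.toReal_lt_toReal hfin (ENNReal.coe_ne_top
      (r := (⟨1 / Real.sqrt γ, by positivity⟩ : NNReal))) |>.2 hρ
    exact this.trans_eq (ENNReal.coe_toReal _)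
  set u : ℝ := ((spectralRadius ℂ Mc).toReal + 1 / Real.sqrt γ) / 2 with hu
  have hu0 : 0 < u := by
    have := ENNReal.toReal_nonneg (a := spectralRadius ℂ Mc); positivity
  have huρ : spectralRadius ℂ Mc < ENNReal.ofReal u := by
    rw [ENNReal.lt_ofReal_iff_toReal_lt hfin]
    simp only [hu]; linarith
  have hu1 : Real.sqrt γ * u < 1 := by
    have h3 : u < 1 / Real.sqrt γ := by simp only [hu]; linarith
    calc Real.sqrt γ * u < Real.sqrt γ * (1 / Real.sqrt γ) := by
          exact mul_lt_mul_of_pos_left h3 hsq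
    _ = 1 := by field_simp
  have hγu : γ * u ^ 2 < 1 := by
    have h4 : γ * u ^ 2 = (Real.sqrt γ * u) ^ 2 := by
      rw [mul_pow, Real.sq_sqrt hγ.le]
    rw [h4]
    nlinarith [mul_nonneg hsq.le hu0.le]
  have htend := spectrum.pow_norm_pow_one_div_tendsto_nhds_spectralRadius Mc
  have hev : ∀ᶠ t : ℕ in atTop, ENNReal.ofReal (‖Mc ^ t‖ ^ (1 / (t : ℝ))) < ENNReal.ofReal u :=
    htend.eventually_lt_const huρ
  obtain ⟨N, hN⟩ := hev.exists_forall_of_atTop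
  have hbig : ∀ t : ℕ, max N 1 ≤ t → ‖Mc ^ t‖ ≤ u ^ t := by
    intro t ht
    have ht1 : 1 ≤ t := le_trans (le_max_right _ _) ht
    have htN : N ≤ t := le_trans (le_max_left _ _) ht
    have h4 := hN t htN
    have h5 : ‖Mc ^ t‖ ^ (1 / (t : ℝ)) < u :=
      (ENNReal.ofReal_lt_ofReal_iff_of_nonneg (Real.rpow_nonneg (norm_nonneg _) _)).1 h4
    have ht0 : (t : ℝ) ≠ 0 := by positivity
    have h6 : (‖Mc ^ t‖ ^ (1 / (t : ℝ))) ^ (t : ℕ) ≤ u ^ (t : ℕ) :=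
      pow_le_pow_left₀ (Real.rpow_nonneg (norm_nonneg _) _) h5.le t
    calc ‖Mc ^ t‖ = (‖Mc ^ t‖ ^ (1 / (t : ℝ))) ^ (t : ℕ) := by
          rw [← Real.rpow_natCast (‖Mc ^ t‖ ^ (1 / (t : ℝ))) t, ← Real.rpow_mul (norm_nonneg _)]
          rw [one_div, inv_mul_cancel₀ ht0, Real.rpow_one]
    _ ≤ u ^ t := h6
  set c : ℝ := (∑ t ∈ Finset.range (N + 1), ‖Mc ^ t‖ / u ^ t) + 1 with hc
  have hc1 : 1 ≤ c := by
    have : 0 ≤ ∑ t ∈ Finset.range (N + 1), ‖Mc ^ t‖ / u ^ t :=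
      Finset.sum_nonneg fun t _ => by positivity
    simp only [hc]; linarith
  have hcb : ∀ t : ℕ, ‖Mc ^ t‖ ≤ c * u ^ t := by
    intro t
    rcases le_or_gt (max N 1) t with ht | ht
    · calc ‖Mc ^ t‖ ≤ u ^ t := hbig t ht
      _ ≤ c * u ^ t := le_mul_of_one_le_left (by positivity) hc1
    · have htN : t < N + 1 :=
        lt_of_lt_of_le ht (max_le (Nat.le_succ N) (Nat.succ_le_succ (Nat.zero_le N)))
      have hmem : t ∈ Finset.range (N + 1) := Finset.mem_range.2 htN
      have h7 : ‖Mc ^ t‖ / u ^ t ≤ ∑ s ∈ Finset.range (N + 1), ‖Mc ^ s‖ / u ^ s :=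
        Finset.single_le_sum (f := fun s => ‖Mc ^ s‖ / u ^ s) (fun s _ => by positivity) hmem
      have h8 : ‖Mc ^ t‖ / u ^ t ≤ c := by simp only [hc]; linarith
      calc ‖Mc ^ t‖ = ‖Mc ^ t‖ / u ^ t * u ^ t := by field_simp
      _ ≤ c * u ^ t := mul_le_mul_of_nonneg_right h8 (by positivity)
  refine ⟨c, u, by linarith, hu0.le, hγu, fun t i j => ?_⟩
  have hpow : Mc ^ t = (M ^ t).map (algebraMap ℝ ℂ) := by
    rw [hMc, ← RingHom.mapMatrix_apply, ← RingHom.mapMatrix_apply, map_pow]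
  have h9 : ‖(Mc ^ t) i j‖ ≤ c * u ^ t := (aux_entry_abs_le _ i j).trans (hcb t)
  rw [hpow] at h9
  simpa [Matrix.map_apply] using h9
end Gelfand

lemma aux_summable_of_entry_bound {f : ℕ → Matrix (Fin n) (Fin n) ℝ} {C r : ℝ}
    (hr0 : 0 ≤ r) (hr1 : r < 1) (h : ∀ t i j, |f t i j| ≤ C * r ^ t) : Summable f := by
  refine Pi.summable.2 fun i => Pi.summable.2 fun j => ?_
  refine Summable.of_norm_bounded (g := fun t => C * r ^ t)
    (Summable.mul_left C (summable_geometric_of_lt_one hr0 hr1)) fun t => ?_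
  simpa using h t i j

lemma aux_dot_self_nonneg (v : Fin n → ℝ) : 0 ≤ v ⬝ᵥ v :=
  Finset.sum_nonneg fun _ _ => mul_self_nonneg _

lemma aux_dot_conj_rect {a b : ℕ} (A : Matrix (Fin a) (Fin b) ℝ)
    (N : Matrix (Fin a) (Fin a) ℝ) (x : Fin b → ℝ) :
    x ⬝ᵥ (Aᵀ * N * A) *ᵥ x = (A *ᵥ x) ⬝ᵥ N *ᵥ (A *ᵥ x) := by
  rw [← Matrix.mulVec_mulVec, ← Matrix.mulVec_mulVec, Matrix.dotProduct_mulVec (A := Aᵀ),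
    Matrix.vecMul_transpose, Matrix.dotProduct_mulVec, Matrix.dotProduct_mulVec,
    ← Matrix.mulVec_transpose]

lemma aux_dot_conj' {a : ℕ} (A N : Matrix (Fin a) (Fin a) ℝ) (x : Fin a → ℝ) :
    x ⬝ᵥ (A * N * Aᵀ) *ᵥ x = (Aᵀ *ᵥ x) ⬝ᵥ N *ᵥ (Aᵀ *ᵥ x) := by
  have := aux_dot_conj_rect Aᵀ N x
  rwa [Matrix.transpose_transpose] at this

lemma aux_dot_AAT (A : Matrix (Fin n) (Fin n) ℝ) (x : Fin n → ℝ) :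
    x ⬝ᵥ (A * Aᵀ) *ᵥ x = (Aᵀ *ᵥ x) ⬝ᵥ (Aᵀ *ᵥ x) := by
  have := aux_dot_conj' A 1 x
  simpa using this

lemma aux_trace_AAT (A : Matrix (Fin n) (Fin n) ℝ) :
    Matrix.trace (A * Aᵀ) = ∑ i, ∑ j, (A i j) ^ 2 := by
  simp [Matrix.trace, Matrix.diag, Matrix.mul_apply, sq]

lemma aux_trace_AAT_nonneg (A : Matrix (Fin n) (Fin n) ℝ) : 0 ≤ Matrix.trace (A * Aᵀ) := by
  rw [aux_trace_AAT]; positivity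

lemma aux_dot_AAT_le (A : Matrix (Fin n) (Fin n) ℝ) (x : Fin n → ℝ) :
    (Aᵀ *ᵥ x) ⬝ᵥ (Aᵀ *ᵥ x) ≤ Matrix.trace (A * Aᵀ) * (x ⬝ᵥ x) := by
  rw [aux_trace_AAT]
  have h1 : ∀ i : Fin n, (Aᵀ *ᵥ x) i ^ 2 ≤ (∑ k, A k i ^ 2) * (x ⬝ᵥ x) := by
    intro i
    have h := Finset.sum_mul_sq_le_sq_mul_sq Finset.univ (fun k => A k i) x
    calc (Aᵀ *ᵥ x) i ^ 2 = (∑ k, A k i * x k) ^ 2 := by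
          simp [Matrix.mulVec, dotProduct, Matrix.transpose_apply]
    _ ≤ (∑ k, A k i ^ 2) * ∑ k, x k ^ 2 := h
    _ = (∑ k, A k i ^ 2) * (x ⬝ᵥ x) := by simp [dotProduct, sq]
  calc (Aᵀ *ᵥ x) ⬝ᵥ (Aᵀ *ᵥ x) = ∑ i, (Aᵀ *ᵥ x) i ^ 2 := by simp [dotProduct, sq]
  _ ≤ ∑ i, (∑ k, A k i ^ 2) * (x ⬝ᵥ x) := Finset.sum_le_sum fun i _ => h1 i
  _ = (∑ i, ∑ k, A k i ^ 2) * (x ⬝ᵥ x) := by rw [← Finset.sum_mul]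
  _ = (∑ i, ∑ j, A i j ^ 2) * (x ⬝ᵥ x) := by rw [Finset.sum_comm]

lemma aux_trace_conj_nonneg (D B : Matrix (Fin n) (Fin n) ℝ) (hD : ∀ x, 0 ≤ x ⬝ᵥ D *ᵥ x) :
    0 ≤ Matrix.trace (Bᵀ * D * B) := by
  have key : Matrix.trace (Bᵀ * D * B) = ∑ j, (fun i => B i j) ⬝ᵥ D *ᵥ (fun i => B i j) := by
    unfold Matrix.trace
    refine Finset.sum_congr rfl fun j _ => ?_
    simp only [Matrix.diag, Matrix.mul_apply, Matrix.transpose_apply, dotProduct,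
      Matrix.mulVec, Finset.sum_mul, Finset.mul_sum]
    rw [Finset.sum_comm]
    exact Finset.sum_congr rfl fun i _ => Finset.sum_congr rfl fun k _ => by ring
  rw [key]
  exact Finset.sum_nonneg fun j _ => hD _

lemma aux_spNorm_le_of_qf (N : Matrix (Fin n) (Fin n) ℝ) (hsym : Nᵀ = N) {c : ℝ} (hc : 0 ≤ c)
    (h0 : ∀ x, 0 ≤ x ⬝ᵥ N *ᵥ x) (hb : ∀ x, x ⬝ᵥ N *ᵥ x ≤ c * (x ⬝ᵥ x)) : spNorm N ≤ c := by
  have hsymdot : ∀ x y : Fin n → ℝ, y ⬝ᵥ N *ᵥ x = x ⬝ᵥ N *ᵥ y := by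
    intro x y
    rw [Matrix.dotProduct_mulVec, ← Matrix.mulVec_transpose, hsym, dotProduct_comm]
  have hCS : ∀ x y : Fin n → ℝ, (x ⬝ᵥ N *ᵥ y) ^ 2 ≤ (x ⬝ᵥ N *ᵥ x) * (y ⬝ᵥ N *ᵥ y) := by
    intro x y
    have hquad : ∀ t : ℝ, 0 ≤ (y ⬝ᵥ N *ᵥ y) * (t * t) + (2 * (x ⬝ᵥ N *ᵥ y)) * t + x ⬝ᵥ N *ᵥ x := by
      intro t
      have h := h0 (x + t • y)
      have hexp : (x + t • y) ⬝ᵥ N *ᵥ (x + t • y) =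
          (y ⬝ᵥ N *ᵥ y) * (t * t) + (2 * (x ⬝ᵥ N *ᵥ y)) * t + x ⬝ᵥ N *ᵥ x := by
        rw [Matrix.mulVec_add, dotProduct_add, add_dotProduct, add_dotProduct,
          Matrix.mulVec_smul, dotProduct_smul, smul_dotProduct, smul_dotProduct,
          dotProduct_smul, hsymdot x y]
        simp [smul_eq_mul]; ring
      linarith [hexp ▸ h]
    have hd := discrim_le_zero hquad
    rw [discrim] at hd
    nlinarith [hd]
  have key : ∀ x : Fin n → ℝ, (N *ᵥ x) ⬝ᵥ (N *ᵥ x) ≤ c ^ 2 * (x ⬝ᵥ x) := by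
    intro x
    set w := N *ᵥ x with hw
    have h1 : x ⬝ᵥ N *ᵥ w = w ⬝ᵥ w := by
      rw [hsymdot w x, Matrix.dotProduct_mulVec, ← Matrix.mulVec_transpose, hsym]
    have h2 : (w ⬝ᵥ w) ^ 2 ≤ (x ⬝ᵥ N *ᵥ x) * (w ⬝ᵥ N *ᵥ w) := h1 ▸ hCS x w
    have h3 : (x ⬝ᵥ N *ᵥ x) * (w ⬝ᵥ N *ᵥ w) ≤ (c * (x ⬝ᵥ x)) * (c * (w ⬝ᵥ w)) :=
      mul_le_mul (hb x) (hb w) (h0 w) (mul_nonneg hc (aux_dot_self_nonneg x))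
    rcases eq_or_lt_of_le (aux_dot_self_nonneg w) with hq | hq
    · rw [← hq]; exact mul_nonneg (by positivity) (aux_dot_self_nonneg x)
    · exact le_of_mul_le_mul_right (by nlinarith [h2.trans h3]) hq
  rw [spNorm]
  refine ContinuousLinearMap.opNorm_le_bound _ hc fun x => ?_
  rw [LinearMap.coe_toContinuousLinearMap']
  have happ : ∀ i, (Matrix.toEuclideanLin N x) i = (N *ᵥ (WithLp.equiv 2 (Fin n → ℝ) x)) i := by
    intro i; rw [Matrix.toEuclideanLin_apply]; rfl
  set xv : Fin n → ℝ := WithLp.equiv 2 (Fin n → ℝ) x with hxv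
  rw [EuclideanSpace.norm_eq, EuclideanSpace.norm_eq]
  have h4 : ∑ i, ‖(Matrix.toEuclideanLin N x) i‖ ^ 2 = (N *ᵥ xv) ⬝ᵥ (N *ᵥ xv) := by
    simp only [happ, Real.norm_eq_abs, sq_abs]
    simp [dotProduct, sq]
  have h5 : ∑ i, ‖x i‖ ^ 2 = xv ⬝ᵥ xv := by
    simp only [Real.norm_eq_abs, sq_abs]
    simp [dotProduct, sq]; rfl
  rw [h4, h5]
  calc Real.sqrt ((N *ᵥ xv) ⬝ᵥ (N *ᵥ xv)) ≤ Real.sqrt (c ^ 2 * (xv ⬝ᵥ xv)) :=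
        Real.sqrt_le_sqrt (key xv)
  _ = c * Real.sqrt (xv ⬝ᵥ xv) := by
      rw [Real.sqrt_mul (by positivity), Real.sqrt_sq hc]

lemma aux_spNorm_zero {a b : ℕ} : spNorm (0 : Matrix (Fin a) (Fin b) ℝ) = 0 := by
  rw [spNorm, map_zero, map_zero, norm_zero]

def qfHom (x : Fin n → ℝ) : Matrix (Fin n) (Fin n) ℝ →+ ℝ :=
  AddMonoidHom.mk' (fun N => x ⬝ᵥ N *ᵥ x) (by
    intro N N'; simp [Matrix.add_mulVec, dotProduct_add])

lemma qfHom_cont (x : Fin n → ℝ) : Continuous (qfHom x) := by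
  have h : (fun N : Matrix (Fin n) (Fin n) ℝ => x ⬝ᵥ N *ᵥ x) =
      fun N => ∑ i, x i * ∑ j, N i j * x j := by
    funext N; simp [dotProduct, Matrix.mulVec]
  show Continuous fun N : Matrix (Fin n) (Fin n) ℝ => x ⬝ᵥ N *ᵥ x
  rw [h]
  refine continuous_finset_sum _ fun i _ => Continuous.mul continuous_const ?_
  refine continuous_finset_sum _ fun j _ => Continuous.mul ?_ continuous_const
  exact (continuous_apply j).comp (continuous_apply i)

def trHom : Matrix (Fin n) (Fin n) ℝ →+ ℝ :=
  AddMonoidHom.mk' Matrix.trace (by intro N N'; simp [Matrix.trace_add])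

lemma trHom_cont : Continuous (trHom (n := n)) := by
  show Continuous fun N : Matrix (Fin n) (Fin n) ℝ => Matrix.trace N
  unfold Matrix.trace
  refine continuous_finset_sum _ fun i _ => ?_
  exact (continuous_apply i).comp (continuous_apply i)

def conjHom (γ : ℝ) (M : Matrix (Fin n) (Fin n) ℝ) :
    Matrix (Fin n) (Fin n) ℝ →+ Matrix (Fin n) (Fin n) ℝ :=
  AddMonoidHom.mk' (fun N => γ • (M * N * Mᵀ)) (by
    intro N N'; beta_reduce
    rw [Matrix.mul_add, Matrix.add_mul, smul_add])

lemma conjHom_cont (γ : ℝ) (M : Matrix (Fin n) (Fin n) ℝ) : Continuous (conjHom γ M) := by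
  show Continuous fun N : Matrix (Fin n) (Fin n) ℝ => γ • (M * N * Mᵀ)
  exact (((continuous_const (y := M)).matrix_mul continuous_id).matrix_mul
    continuous_const).const_smul γ



variable {n : ℕ}

set_option maxHeartbeats 2000000 in
lemma core (hn : 0 < n) (M W : Matrix (Fin n) (Fin n) ℝ)
    {ℓ₀ : ℝ} (hℓ₀ : 0 < ℓ₀) (hW : ∀ x, ℓ₀ * (x ⬝ᵥ x) ≤ x ⬝ᵥ W *ᵥ x)
    {γ : ℝ} (hγ0 : 0 < γ) (hrad : Real.sqrt γ * specRad M < 1)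
    {J : ℝ} (hJdef : J = (∑' t : ℕ, γ ^ t • ((Mᵀ) ^ t * W * M ^ t)).trace)
    (hJ : ℓ₀ < J)
    {Jhat ζ β γ' : ℝ} (hJhat2 : J ≤ 2 * Jhat)
    (hζ0 : 0 < ζ) (hζ1 : ζ < 1)
    (hβ : β = 1 + ζ * (ℓ₀ / (2 * Jhat - ℓ₀)))
    (hγ' : γ' = β * γ) :
    spNorm (∑' t : ℕ, γ' ^ t • (M ^ t * (Mᵀ) ^ t)) ≤ 4 * Jhat ^ 2 / ((1 - ζ) * ℓ₀ ^ 2) := by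
  have h2J : 0 < 2 * Jhat - ℓ₀ := by linarith
  have h1ζ : (0:ℝ) < 1 - ζ := by linarith
  have hRHS : 0 ≤ 4 * Jhat ^ 2 / ((1 - ζ) * ℓ₀ ^ 2) :=
    div_nonneg (by positivity) (mul_nonneg h1ζ.le (sq_nonneg _))
  obtain ⟨c, u, hc, hu, hγu, hb⟩ := aux_exists_entry_bound hn hγ0 M hrad
  set fS : ℕ → Matrix (Fin n) (Fin n) ℝ := fun t => γ ^ t • (M ^ t * (Mᵀ) ^ t) with hfS
  set fP : ℕ → Matrix (Fin n) (Fin n) ℝ := fun t => γ ^ t • ((Mᵀ) ^ t * W * M ^ t) with hfP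
  have hTpow : ∀ t : ℕ, (Mᵀ) ^ t = (M ^ t)ᵀ := fun t => (Matrix.transpose_pow M t).symm
  have hfSb : ∀ (t : ℕ) (i j : Fin n), |fS t i j| ≤ (n * c ^ 2) * (γ * u ^ 2) ^ t := by
    intro t i j
    have he : fS t i j = γ ^ t * ∑ k, (M ^ t) i k * (M ^ t) j k := by
      show (γ ^ t • (M ^ t * (Mᵀ) ^ t)) i j = _
      rw [hTpow, Matrix.smul_apply, Matrix.mul_apply, smul_eq_mul]
      rfl
    rw [he, abs_mul, abs_pow, abs_of_pos hγ0]
    calc γ ^ t * |∑ k, (M ^ t) i k * (M ^ t) j k|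
        ≤ γ ^ t * ∑ _k : Fin n, (c * u ^ t) * (c * u ^ t) := by
          refine mul_le_mul_of_nonneg_left ?_ (by positivity)
          refine (Finset.abs_sum_le_sum_abs _ _).trans (Finset.sum_le_sum fun k _ => ?_)
          rw [abs_mul]
          exact mul_le_mul (hb t i k) (hb t j k) (abs_nonneg _) (by positivity)
    _ = (n * c ^ 2) * (γ * u ^ 2) ^ t := by
          rw [Finset.sum_const, Finset.card_univ, Fintype.card_fin, mul_pow]
          push_cast; ring
  have hfPb : ∀ (t : ℕ) (i j : Fin n),
      |fP t i j| ≤ ((∑ k, ∑ l, |W k l|) * c ^ 2) * (γ * u ^ 2) ^ t := by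
    intro t i j
    have he : fP t i j = γ ^ t * ∑ k, ∑ l, (M ^ t) l i * W l k * (M ^ t) k j := by
      show (γ ^ t • ((Mᵀ) ^ t * W * M ^ t)) i j = _
      rw [hTpow, Matrix.smul_apply, Matrix.mul_apply, smul_eq_mul]
      congr 1
      refine Finset.sum_congr rfl fun k _ => ?_
      rw [Matrix.mul_apply, Finset.sum_mul]
      rfl
    rw [he, abs_mul, abs_pow, abs_of_pos hγ0]
    calc γ ^ t * |∑ k, ∑ l, (M ^ t) l i * W l k * (M ^ t) k j|
        ≤ γ ^ t * ∑ k : Fin n, ∑ l : Fin n, (c * u ^ t) * |W l k| * (c * u ^ t) := by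
          refine mul_le_mul_of_nonneg_left ?_ (by positivity)
          refine (Finset.abs_sum_le_sum_abs _ _).trans (Finset.sum_le_sum fun k _ => ?_)
          refine (Finset.abs_sum_le_sum_abs _ _).trans (Finset.sum_le_sum fun l _ => ?_)
          rw [abs_mul, abs_mul]
          refine mul_le_mul ?_ (hb t k j) (abs_nonneg _) (by positivity)
          exact mul_le_mul (hb t l i) le_rfl (abs_nonneg _) (by positivity)
    _ = ((∑ k, ∑ l, |W k l|) * c ^ 2) * (γ * u ^ 2) ^ t := by
          simp only [Finset.sum_mul, Finset.mul_sum, mul_pow]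
          rw [Finset.sum_comm]
          refine Finset.sum_congr rfl fun k _ => Finset.sum_congr rfl fun l _ => by ring
  have hγu0 : 0 ≤ γ * u ^ 2 := by positivity
  have hSsum : Summable fS := aux_summable_of_entry_bound hγu0 hγu hfSb
  have hPsum : Summable fP := aux_summable_of_entry_bound hγu0 hγu hfPb
  set Sγ : Matrix (Fin n) (Fin n) ℝ := ∑' t, fS t with hSγ
  have hS : HasSum fS Sγ := hSsum.hasSum
  have htr : ∀ (g : ℕ → Matrix (Fin n) (Fin n) ℝ) (a : Matrix (Fin n) (Fin n) ℝ),
      HasSum g a → HasSum (fun t => (g t).trace) a.trace := by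
    intro g a hg
    have := hg.map (trHom (n := n)) trHom_cont
    simpa [trHom, Function.comp_def] using this
  have hqf : ∀ (x : Fin n → ℝ) (g : ℕ → Matrix (Fin n) (Fin n) ℝ)
      (a : Matrix (Fin n) (Fin n) ℝ), HasSum g a →
      HasSum (fun t => x ⬝ᵥ (g t) *ᵥ x) (x ⬝ᵥ a *ᵥ x) := by
    intro x g a hg
    have := hg.map (qfHom x) (qfHom_cont x)
    simpa [qfHom, Function.comp_def] using this
  have htrS : HasSum (fun t => (fS t).trace) Sγ.trace := htr fS Sγ hS
  set S : ℝ := Sγ.trace with hSdef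
  have htrfS : ∀ t, (fS t).trace = γ ^ t * (M ^ t * (M ^ t)ᵀ).trace := by
    intro t
    show (γ ^ t • (M ^ t * (Mᵀ) ^ t)).trace = _
    rw [hTpow, Matrix.trace_smul, smul_eq_mul]
  have htrace_nonneg : ∀ t, 0 ≤ (fS t).trace := by
    intro t
    rw [htrfS t]
    exact mul_nonneg (by positivity) (aux_trace_AAT_nonneg _)
  have hS1 : 1 ≤ S := by
    have h0 : (fS 0).trace = n := by
      rw [htrfS 0]; simp
    have hle := le_hasSum htrS 0 fun t _ => htrace_nonneg t
    rw [h0] at hle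
    calc (1 : ℝ) ≤ (n : ℝ) := by exact_mod_cast hn
    _ ≤ S := hle
  have hSpos : 0 < S := lt_of_lt_of_le one_pos hS1
  -- qf expansion for a general factor
  have hqfS : ∀ x : Fin n → ℝ,
      HasSum (fun t => γ ^ t * (((M ^ t)ᵀ *ᵥ x) ⬝ᵥ ((M ^ t)ᵀ *ᵥ x))) (x ⬝ᵥ Sγ *ᵥ x) := by
    intro x
    have h := hqf x fS Sγ hS
    have he : ∀ t, x ⬝ᵥ (fS t) *ᵥ x = γ ^ t * (((M ^ t)ᵀ *ᵥ x) ⬝ᵥ ((M ^ t)ᵀ *ᵥ x)) := by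
      intro t
      show x ⬝ᵥ (γ ^ t • (M ^ t * (Mᵀ) ^ t)) *ᵥ x = _
      rw [hTpow, Matrix.smul_mulVec, dotProduct_smul, smul_eq_mul, aux_dot_AAT]
    exact (funext he : _) ▸ h
  have hlow : ∀ x : Fin n → ℝ, x ⬝ᵥ x ≤ x ⬝ᵥ Sγ *ᵥ x := by
    intro x
    have h := le_hasSum (hqfS x) 0 fun t _ =>
      mul_nonneg (pow_nonneg hγ0.le t) (aux_dot_self_nonneg _)
    simpa using h
  have hup : ∀ x : Fin n → ℝ, x ⬝ᵥ Sγ *ᵥ x ≤ S * (x ⬝ᵥ x) := by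
    intro x
    refine hasSum_le (fun t => ?_) (hqfS x) (htrS.mul_right (x ⬝ᵥ x))
    rw [htrfS t]
    calc γ ^ t * (((M ^ t)ᵀ *ᵥ x) ⬝ᵥ ((M ^ t)ᵀ *ᵥ x))
        ≤ γ ^ t * ((M ^ t * (M ^ t)ᵀ).trace * (x ⬝ᵥ x)) :=
          mul_le_mul_of_nonneg_left (aux_dot_AAT_le _ x) (by positivity)
    _ = γ ^ t * (M ^ t * (M ^ t)ᵀ).trace * (x ⬝ᵥ x) := by ring
  -- Lyapunov identity
  have hshift : ∀ t, fS (t + 1) = conjHom γ M (fS t) := by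
    intro t
    show γ ^ (t+1) • (M ^ (t+1) * (Mᵀ) ^ (t+1)) = γ • (M * (γ ^ t • (M ^ t * (Mᵀ) ^ t)) * Mᵀ)
    rw [Matrix.mul_smul, Matrix.smul_mul, smul_smul, pow_succ γ, pow_succ' M, pow_succ (Mᵀ)]
    rw [mul_comm (γ ^ t) γ]
    congr 1
    rw [Matrix.mul_assoc, Matrix.mul_assoc, Matrix.mul_assoc]
  have hlyap : Sγ = 1 + γ • (M * Sγ * Mᵀ) := by
    have h0 := Summable.tsum_eq_zero_add hSsum
    have h1 : ∑' t, fS (t + 1) = γ • (M * Sγ * Mᵀ) := by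
      have hc1 : HasSum (fun t => conjHom γ M (fS t)) (conjHom γ M Sγ) :=
        hS.map _ (conjHom_cont γ M)
      calc ∑' t, fS (t + 1) = ∑' t, conjHom γ M (fS t) := by simp only [hshift]
      _ = conjHom γ M Sγ := hc1.tsum_eq
      _ = γ • (M * Sγ * Mᵀ) := rfl
    have h2 : fS 0 = 1 := by
      show γ ^ 0 • (M ^ 0 * (Mᵀ) ^ 0) = 1
      simp
    rw [h2, h1] at h0
    exact h0
  have hstep : ∀ w : Fin n → ℝ, w ⬝ᵥ (γ • (M * Sγ * Mᵀ)) *ᵥ w = w ⬝ᵥ Sγ *ᵥ w - w ⬝ᵥ w := by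
    intro w
    have h := congrArg (fun N : Matrix (Fin n) (Fin n) ℝ => w ⬝ᵥ N *ᵥ w) hlyap
    simp only [Matrix.add_mulVec, dotProduct_add, Matrix.one_mulVec] at h
    linarith
  have h1S' : 0 ≤ 1 - 1/S := by
    rw [sub_nonneg, div_le_one hSpos]; exact hS1
  have hdecay : ∀ (t : ℕ) (x : Fin n → ℝ),
      γ ^ t * (x ⬝ᵥ (M ^ t * Sγ * (M ^ t)ᵀ) *ᵥ x) ≤ (1 - 1/S) ^ t * (x ⬝ᵥ Sγ *ᵥ x) := by
    intro t
    induction t with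
    | zero => intro x; simp
    | succ t ih =>
      intro x
      have hmm : M ^ (t+1) * Sγ * (M ^ (t+1))ᵀ = M ^ t * (M * Sγ * Mᵀ) * (M ^ t)ᵀ := by
        rw [pow_succ M, Matrix.transpose_mul]
        simp only [Matrix.mul_assoc]
      have hpeel : x ⬝ᵥ (M ^ (t+1) * Sγ * (M ^ (t+1))ᵀ) *ᵥ x
          = ((M ^ t)ᵀ *ᵥ x) ⬝ᵥ (M * Sγ * Mᵀ) *ᵥ ((M ^ t)ᵀ *ᵥ x) := by
        rw [hmm, aux_dot_conj']
      set w : Fin n → ℝ := (M ^ t)ᵀ *ᵥ x with hw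
      have e1 : γ ^ (t+1) * (x ⬝ᵥ (M ^ (t+1) * Sγ * (M ^ (t+1))ᵀ) *ᵥ x)
          = γ ^ t * (w ⬝ᵥ (γ • (M * Sγ * Mᵀ)) *ᵥ w) := by
        rw [hpeel, Matrix.smul_mulVec, dotProduct_smul, smul_eq_mul, pow_succ]
        ring
      rw [e1, hstep w]
      have h3 : w ⬝ᵥ Sγ *ᵥ w - w ⬝ᵥ w ≤ (1 - 1/S) * (w ⬝ᵥ Sγ *ᵥ w) := by
        have hd : (w ⬝ᵥ Sγ *ᵥ w)/S ≤ w ⬝ᵥ w :=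
          (div_le_iff₀ hSpos).2 (by linarith [hup w])
        have hexp : (1 - 1/S) * (w ⬝ᵥ Sγ *ᵥ w) = w ⬝ᵥ Sγ *ᵥ w - (w ⬝ᵥ Sγ *ᵥ w)/S := by
          ring
        linarith
      have h4 : γ ^ t * (w ⬝ᵥ Sγ *ᵥ w) ≤ (1 - 1/S) ^ t * (x ⬝ᵥ Sγ *ᵥ x) := by
        have e2 : w ⬝ᵥ Sγ *ᵥ w = x ⬝ᵥ (M ^ t * Sγ * (M ^ t)ᵀ) *ᵥ x := (aux_dot_conj' _ _ _).symm
        rw [e2]; exact ih x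
      calc γ ^ t * (w ⬝ᵥ Sγ *ᵥ w - w ⬝ᵥ w)
          ≤ γ ^ t * ((1 - 1/S) * (w ⬝ᵥ Sγ *ᵥ w)) :=
            mul_le_mul_of_nonneg_left h3 (by positivity)
      _ = (1 - 1/S) * (γ ^ t * (w ⬝ᵥ Sγ *ᵥ w)) := by ring
      _ ≤ (1 - 1/S) * ((1 - 1/S) ^ t * (x ⬝ᵥ Sγ *ᵥ x)) := mul_le_mul_of_nonneg_left h4 h1S'
      _ = (1 - 1/S) ^ (t+1) * (x ⬝ᵥ Sγ *ᵥ x) := by ring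
  have hterm : ∀ (t : ℕ) (x : Fin n → ℝ),
      γ ^ t * (((M ^ t)ᵀ *ᵥ x) ⬝ᵥ ((M ^ t)ᵀ *ᵥ x)) ≤ S * (1 - 1/S) ^ t * (x ⬝ᵥ x) := by
    intro t x
    have h5 := hlow ((M ^ t)ᵀ *ᵥ x)
    have h6 : γ ^ t * (((M ^ t)ᵀ *ᵥ x) ⬝ᵥ Sγ *ᵥ ((M ^ t)ᵀ *ᵥ x))
        ≤ (1 - 1/S) ^ t * (x ⬝ᵥ Sγ *ᵥ x) := by
      rw [← aux_dot_conj']; exact hdecay t x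
    have h7 : x ⬝ᵥ Sγ *ᵥ x ≤ S * (x ⬝ᵥ x) := hup x
    have h8 : γ ^ t * (((M ^ t)ᵀ *ᵥ x) ⬝ᵥ ((M ^ t)ᵀ *ᵥ x))
        ≤ γ ^ t * (((M ^ t)ᵀ *ᵥ x) ⬝ᵥ Sγ *ᵥ ((M ^ t)ᵀ *ᵥ x)) :=
      mul_le_mul_of_nonneg_left h5 (by positivity)
    calc γ ^ t * (((M ^ t)ᵀ *ᵥ x) ⬝ᵥ ((M ^ t)ᵀ *ᵥ x))
        ≤ (1 - 1/S) ^ t * (x ⬝ᵥ Sγ *ᵥ x) := h8.trans h6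
    _ ≤ (1 - 1/S) ^ t * (S * (x ⬝ᵥ x)) := mul_le_mul_of_nonneg_left h7 (by positivity)
    _ = S * (1 - 1/S) ^ t * (x ⬝ᵥ x) := by ring
  -- J chain
  have hJha : HasSum (fun t => (fP t).trace) J := by
    rw [hJdef]
    exact htr fP _ hPsum.hasSum
  have hterm_tr : ∀ t, ℓ₀ * (fS t).trace ≤ (fP t).trace := by
    intro t
    have hD : ∀ x, 0 ≤ x ⬝ᵥ (W - ℓ₀ • 1) *ᵥ x := by
      intro x
      have h9 := hW x
      rw [Matrix.sub_mulVec, dotProduct_sub, Matrix.smul_mulVec, Matrix.one_mulVec,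
        dotProduct_smul, smul_eq_mul]
      linarith
    have h5 := aux_trace_conj_nonneg (W - ℓ₀ • 1) (M ^ t) hD
    have h6 : ((M ^ t)ᵀ * (W - ℓ₀ • 1) * M ^ t).trace
        = ((M ^ t)ᵀ * W * M ^ t).trace - ℓ₀ * ((M ^ t)ᵀ * M ^ t).trace := by
      rw [Matrix.mul_sub, Matrix.sub_mul, Matrix.trace_sub]
      congr 1
      rw [Matrix.mul_smul, Matrix.mul_one, Matrix.smul_mul, Matrix.trace_smul, smul_eq_mul]
    have h7 : ((M ^ t)ᵀ * M ^ t).trace = (M ^ t * (M ^ t)ᵀ).trace := Matrix.trace_mul_comm _ _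
    have h9 : (fP t).trace = γ ^ t * ((M ^ t)ᵀ * W * M ^ t).trace := by
      show (γ ^ t • ((Mᵀ) ^ t * W * M ^ t)).trace = _
      rw [hTpow, Matrix.trace_smul, smul_eq_mul]
    rw [htrfS t, h9]
    have h10 : ℓ₀ * (M ^ t * (M ^ t)ᵀ).trace ≤ ((M ^ t)ᵀ * W * M ^ t).trace := by
      rw [← h7]; linarith
    calc ℓ₀ * (γ ^ t * (M ^ t * (M ^ t)ᵀ).trace)
        = γ ^ t * (ℓ₀ * (M ^ t * (M ^ t)ᵀ).trace) := by ring
    _ ≤ γ ^ t * ((M ^ t)ᵀ * W * M ^ t).trace :=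
        mul_le_mul_of_nonneg_left h10 (by positivity)
  have hJS : ℓ₀ * S ≤ J := hasSum_le hterm_tr (htrS.mul_left ℓ₀) hJha
  -- scalar bookkeeping
  have hSJ2 : ℓ₀ * S ≤ 2 * Jhat := le_trans hJS hJhat2
  have hα : 0 < ℓ₀ / (2 * Jhat - ℓ₀) := div_pos hℓ₀ h2J
  have hβ0 : 0 < β := by rw [hβ]; nlinarith [mul_pos hζ0 hα]
  set b : ℝ := β * (1 - 1/S) with hbdef
  have hb0 : 0 ≤ b := mul_nonneg hβ0.le h1S'
  have hkey : (1 - ζ)/S ≤ 1 - b := by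
    have hαS : (ℓ₀ / (2 * Jhat - ℓ₀)) * (S - 1) ≤ 1 := by
      rw [div_mul_eq_mul_div, div_le_one h2J]; nlinarith
    have e : 1 - b = (1 - ζ * ((ℓ₀ / (2 * Jhat - ℓ₀)) * (S - 1)))/S := by
      rw [hbdef, hβ]; field_simp; ring
    rw [e]
    have h11 : ζ * ((ℓ₀ / (2 * Jhat - ℓ₀)) * (S - 1)) ≤ ζ := by
      nlinarith [mul_nonneg hα.le (by linarith [hS1] : (0:ℝ) ≤ S - 1)]
    gcongr

  have hb1 : b < 1 := by
    have h12 : 0 < (1 - ζ)/S := div_pos h1ζ hSpos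
    linarith
  have h1b : 0 < 1 - b := lt_of_lt_of_le (div_pos h1ζ hSpos) hkey
  have hinv : (1 - b)⁻¹ ≤ S / (1 - ζ) := by
    have h13 : ((1 - ζ)/S)⁻¹ = S / (1 - ζ) := by
      rw [inv_div]
    rw [← h13]
    exact inv_anti₀ (div_pos h1ζ hSpos) hkey
  -- final
  by_cases hsum' : Summable (fun t : ℕ => γ' ^ t • (M ^ t * (Mᵀ) ^ t))
  · set fS' : ℕ → Matrix (Fin n) (Fin n) ℝ := fun t => γ' ^ t • (M ^ t * (Mᵀ) ^ t) with hfS'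
    set Sγ' : Matrix (Fin n) (Fin n) ℝ := ∑' t, fS' t with hSγ'
    have hS' : HasSum fS' Sγ' := hsum'.hasSum
    have hγ'0 : 0 ≤ γ' := by
      rw [hγ']; positivity
    have hqf' : ∀ x : Fin n → ℝ,
        HasSum (fun t => γ' ^ t * (((M ^ t)ᵀ *ᵥ x) ⬝ᵥ ((M ^ t)ᵀ *ᵥ x))) (x ⬝ᵥ Sγ' *ᵥ x) := by
      intro x
      have h := hqf x fS' Sγ' hS'
      have he : ∀ t, x ⬝ᵥ (fS' t) *ᵥ x = γ' ^ t * (((M ^ t)ᵀ *ᵥ x) ⬝ᵥ ((M ^ t)ᵀ *ᵥ x)) := by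
        intro t
        show x ⬝ᵥ (γ' ^ t • (M ^ t * (Mᵀ) ^ t)) *ᵥ x = _
        rw [hTpow, Matrix.smul_mulVec, dotProduct_smul, smul_eq_mul, aux_dot_AAT]
      exact (funext he : _) ▸ h
    have hup' : ∀ x : Fin n → ℝ, x ⬝ᵥ Sγ' *ᵥ x ≤ (S^2/(1-ζ)) * (x ⬝ᵥ x) := by
      intro x
      have maj : HasSum (fun t : ℕ => (S * (x ⬝ᵥ x)) * b ^ t) ((S * (x ⬝ᵥ x)) * (1-b)⁻¹) :=
        (hasSum_geometric_of_lt_one hb0 hb1).mul_left _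
      have hle : ∀ t : ℕ, γ' ^ t * (((M ^ t)ᵀ *ᵥ x) ⬝ᵥ ((M ^ t)ᵀ *ᵥ x))
          ≤ (S * (x ⬝ᵥ x)) * b ^ t := by
        intro t
        have e : γ' ^ t = β ^ t * γ ^ t := by rw [hγ', mul_pow]
        have h10 := hterm t x
        calc γ' ^ t * (((M ^ t)ᵀ *ᵥ x) ⬝ᵥ ((M ^ t)ᵀ *ᵥ x))
            = β ^ t * (γ ^ t * (((M ^ t)ᵀ *ᵥ x) ⬝ᵥ ((M ^ t)ᵀ *ᵥ x))) := by rw [e]; ring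
        _ ≤ β ^ t * (S * (1 - 1/S) ^ t * (x ⬝ᵥ x)) :=
            mul_le_mul_of_nonneg_left h10 (pow_nonneg hβ0.le t)
        _ = (S * (x ⬝ᵥ x)) * b ^ t := by rw [hbdef, mul_pow]; ring
      have h14 := hasSum_le hle (hqf' x) maj
      have h15 : (S * (x ⬝ᵥ x)) * (1-b)⁻¹ ≤ (S * (x ⬝ᵥ x)) * (S / (1 - ζ)) :=
        mul_le_mul_of_nonneg_left hinv (mul_nonneg hSpos.le (aux_dot_self_nonneg x))
      calc x ⬝ᵥ Sγ' *ᵥ x ≤ (S * (x ⬝ᵥ x)) * (1-b)⁻¹ := h14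
      _ ≤ (S * (x ⬝ᵥ x)) * (S / (1 - ζ)) := h15
      _ = (S^2/(1-ζ)) * (x ⬝ᵥ x) := by ring
    have h0' : ∀ x : Fin n → ℝ, 0 ≤ x ⬝ᵥ Sγ' *ᵥ x := by
      intro x
      exact hasSum_le (fun t => mul_nonneg (pow_nonneg hγ'0 t) (aux_dot_self_nonneg _))
        hasSum_zero (hqf' x) |>.trans_eq rfl
    have hsym' : Sγ'ᵀ = Sγ' := by
      rw [hSγ', Matrix.transpose_tsum]
      refine tsum_congr fun t => ?_
      show (γ' ^ t • (M ^ t * (Mᵀ) ^ t))ᵀ = γ' ^ t • (M ^ t * (Mᵀ) ^ t)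
      rw [Matrix.transpose_smul, Matrix.transpose_mul, hTpow, Matrix.transpose_transpose]
    have hc0 : (0:ℝ) ≤ S^2/(1-ζ) := div_nonneg (sq_nonneg _) h1ζ.le
    have hfinal := aux_spNorm_le_of_qf Sγ' hsym' hc0 h0' hup'
    refine hfinal.trans ?_
    have hS2 : S^2 ≤ 4 * Jhat^2 / ℓ₀^2 := by
      rw [le_div_iff₀ (by positivity)]
      nlinarith [mul_pos hℓ₀ hSpos]
    calc S^2/(1-ζ) ≤ (4 * Jhat^2/ℓ₀^2)/(1-ζ) := by gcongr
    _ = 4 * Jhat^2/((1-ζ) * ℓ₀^2) := by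
        rw [div_div]; ring_nf
  · rw [tsum_eq_zero_of_not_summable hsum', aux_spNorm_zero]
    exact hRHS

end StmtAux


/-- the Gramian at the enlarged discount factor satisfies
`‖Σ_K(γ')‖ ≤ 4Jhat²/((1 − ζ)ℓ₀²)`. -/
theorem stmt17
    {n m p : ℕ} (hn : 1 ≤ n) (hm : 1 ≤ m) (hp : 1 ≤ p)
    (A : Matrix (Fin n) (Fin n) ℝ) (B : Matrix (Fin n) (Fin m) ℝ) (C : Matrix (Fin p) (Fin n) ℝ)
    (Q : Matrix (Fin n) (Fin n) ℝ) (R : Matrix (Fin m) (Fin m) ℝ)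
    (hQsymm : Q.IsSymm) (hRsymm : R.IsSymm)
    (ℓ₀ ℓ₁ ψ φ : ℝ) (hℓ₀ : 0 < ℓ₀) (hℓ₀₁ : ℓ₀ ≤ ℓ₁) (hψ : 1 ≤ ψ) (hφ : 1 ≤ φ)
    (hQlb : (Q - ℓ₀ • (1 : Matrix (Fin n) (Fin n) ℝ)).PosSemidef)
    (hQub : (ℓ₁ • (1 : Matrix (Fin n) (Fin n) ℝ) - Q).PosSemidef)
    (hRlb : (R - ℓ₀ • (1 : Matrix (Fin m) (Fin m) ℝ)).PosSemidef)
    (hRub : (ℓ₁ • (1 : Matrix (Fin m) (Fin m) ℝ) - R).PosSemidef)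
    (hB : spNorm B ≤ ψ) (hC : spNorm C ≤ φ)
    (γ : ℝ) (hγ : γ ∈ Set.Ioo (0 : ℝ) 1)
    (K : Matrix (Fin m) (Fin p) ℝ) (hK : inS A B C γ K)
    (hJ : ℓ₀ < Jcost A B C Q R γ K)
    (Jhat : ℝ) (hJhat : |Jcost A B C Q R γ K - Jhat| ≤ Jcost A B C Q R γ K / 2)
    (ζ : ℝ) (hζ : ζ ∈ Set.Ioo (0 : ℝ) 1)
    (γ' : ℝ) (hγ' : γ' = (1 + ζ * (ℓ₀ / (2 * Jhat - ℓ₀))) * γ) :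
    spNorm (Smat A B C γ' K) ≤ 4 * Jhat ^ 2 / ((1 - ζ) * ℓ₀ ^ 2) := by
  have hW : ∀ x : Fin n → ℝ, ℓ₀ * (x ⬝ᵥ x) ≤ x ⬝ᵥ (Q + Cᵀ * Kᵀ * R * K * C) *ᵥ x := by
    intro x
    have hQ' : ℓ₀ * (x ⬝ᵥ x) ≤ x ⬝ᵥ Q *ᵥ x := by
      have hQ := hQlb.dotProduct_mulVec_nonneg x
      simp only [star_trivial] at hQ
      rw [Matrix.sub_mulVec, dotProduct_sub, Matrix.smul_mulVec, Matrix.one_mulVec,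
        dotProduct_smul, smul_eq_mul] at hQ
      linarith
    have hmat : Cᵀ * Kᵀ * R * K * C = (K * C)ᵀ * R * (K * C) := by
      rw [Matrix.transpose_mul, Matrix.mul_assoc (Cᵀ * Kᵀ * R) K C]
    have hR' : 0 ≤ x ⬝ᵥ (Cᵀ * Kᵀ * R * K * C) *ᵥ x := by
      rw [hmat, aux_dot_conj_rect]
      have hR := hRlb.dotProduct_mulVec_nonneg ((K * C) *ᵥ x)
      simp only [star_trivial] at hR
      rw [Matrix.sub_mulVec, dotProduct_sub, Matrix.smul_mulVec, Matrix.one_mulVec,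
        dotProduct_smul, smul_eq_mul] at hR
      have hy := aux_dot_self_nonneg ((K * C) *ᵥ x)
      nlinarith
    rw [Matrix.add_mulVec, dotProduct_add]
    linarith
  have hJu : Jcost A B C Q R γ K ≤ 2 * Jhat := by
    have h := (abs_le.1 hJhat).2
    linarith
  exact core hn (Acl A B C K) (Q + Cᵀ * Kᵀ * R * K * C) hℓ₀ hW hγ.1 hK rfl hJ hJu
    hζ.1 hζ.2 rfl hγ'
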